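/- With the same notation, the second partial derivative satisfies (∂₁²δ̆)(u,w) = -(∂₁²δ)(δ̄(u,-w), -w) / (1 + (∂₁δ)(δ̄(u,-w), -w))³. Consequently, if |∂₁²δ(x,r)| ≤ k|r| and 1 + ∂₁δ(x,r) ≥ η > 0 on ℝ × D_ε, then |(∂₁²δ̆)(u,w)| ≤ (k/η³)|w| for all u ∈ ℝ, w ∈ D_ε. -/

import Mathlib

open Set

/-- The second partial derivative of `δ̆(u,w) = δ̄(u,-w) - u` in `u` satisfies
`∂₁²δ̆(u,w) = -(∂₁²δ)(δ̄(u,-w),-w)/(1 + (∂₁δ)(δ̄(u,-w),-w))³`, and if `|∂₁²δ(x,r)| ≤ k|r|`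
and `1 + ∂₁δ ≥ η > 0` on `ℝ × D_ε` then `|∂₁²δ̆(u,w)| ≤ (k/η³)|w|`. -/
theorem breve_delta_second_u_derivative
    (ε η k : ℝ) (hε : 0 < ε) (hη : 0 < η)
    (Dε : Set ℝ) (hD : Dε = Ioo (-ε) 0 ∪ Ioo 0 ε)
    (δ d1δ d11δ δbar : ℝ → ℝ → ℝ)
    (hd1 : ∀ x : ℝ, ∀ w ∈ Dε, HasDerivAt (fun y => δ y w) (d1δ x w) x)
    (hd11 : ∀ x : ℝ, ∀ w ∈ Dε, HasDerivAt (fun y => d1δ y w) (d11δ x w) x)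
    (hd11bd : ∀ x : ℝ, ∀ w ∈ Dε, |d11δ x w| ≤ k * |w|)
    (hd1lb : ∀ x : ℝ, ∀ w ∈ Dε, η ≤ 1 + d1δ x w)
    (hinv : ∀ w ∈ Dε, ∀ u : ℝ, δbar u w + δ (δbar u w) w = u) :
    ∀ u : ℝ, ∀ w ∈ Dε,
      -- ∂₁δ̆(·,w) is the function v ↦ -(∂₁δ)(δ̄(v,-w),-w)/(1+(∂₁δ)(δ̄(v,-w),-w));
      -- its derivative in u is the displayed quotient
      HasDerivAt (fun v => -(d1δ (δbar v (-w)) (-w)) / (1 + d1δ (δbar v (-w)) (-w)))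
        (-(d11δ (δbar u (-w)) (-w)) / (1 + d1δ (δbar u (-w)) (-w)) ^ 3) u ∧
      |(-(d11δ (δbar u (-w)) (-w)) / (1 + d1δ (δbar u (-w)) (-w)) ^ 3)| ≤ (k / η ^ 3) * |w| := by
  intro u w hw
  -- -w ∈ Dε
  have hw' : -w ∈ Dε := by
    rw [hD] at hw ⊢
    rcases hw with h | h
    · exact Or.inr ⟨by linarith [h.2], by linarith [h.1]⟩
    · exact Or.inl ⟨by linarith [h.2], by linarith [h.1]⟩
  set r := -w with hr
  -- the map g x = x + δ x r
  set g : ℝ → ℝ := fun x => x + δ x r with hg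
  have hgderiv : ∀ x, HasDerivAt g (1 + d1δ x r) x := fun x =>
    (hasDerivAt_id x).add (hd1 x r hw')
  have hpos : ∀ x, (0 : ℝ) < 1 + d1δ x r := fun x => lt_of_lt_of_le hη (hd1lb x r hw')
  have hmono : StrictMono g := strictMono_of_hasDerivAt_pos hgderiv hpos
  have hginv : ∀ v : ℝ, g (δbar v r) = v := fun v => by
    have := hinv r hw' v; simpa [hg, add_comm] using this
  have hsurj : Function.Surjective g := fun v => ⟨δbar v r, hginv v⟩
  -- δbar · r equals the inverse of the order iso, hence continuous
  have hcont : Continuous fun v => δbar v r := by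
    have he : (fun v => δbar v r) = (StrictMono.orderIsoOfSurjective g hmono hsurj).symm := by
      funext v
      apply hmono.injective
      rw [hginv v]
      exact ((StrictMono.orderIsoOfSurjective g hmono hsurj).apply_symm_apply v).symm
    rw [he]
    exact OrderIso.continuous _
  -- derivative of δbar in u
  have hbar : ∀ v : ℝ, HasDerivAt (fun y => δbar y r) (1 + d1δ (δbar v r) r)⁻¹ v := by
    intro v
    refine HasDerivAt.of_local_left_inverse hcont.continuousAt
      (hgderiv (δbar v r)) (ne_of_gt (hpos _)) ?_
    exact Filter.Eventually.of_forall hginv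
  -- derivative of a(v) = d1δ (δbar v r) r
  have ha : HasDerivAt (fun v => d1δ (δbar v r) r)
      (d11δ (δbar u r) r * (1 + d1δ (δbar u r) r)⁻¹) u :=
    (hd11 (δbar u r) r hw').comp (h₂ := fun y => d1δ y r) u (hbar u)
  set A := d1δ (δbar u r) r with hA
  set B := d11δ (δbar u r) r with hB
  have hAne : (1 + A) ≠ 0 := ne_of_gt (hpos _)
  constructor
  · have hnum : HasDerivAt (fun v => -(d1δ (δbar v r) r)) (-(B * (1 + A)⁻¹)) u := ha.neg
    have hden : HasDerivAt (fun v => 1 + d1δ (δbar v r) r) (B * (1 + A)⁻¹) u :=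
      by exact ha.const_add 1
    have : HasDerivAt (fun v => -(d1δ (δbar v r) r) / (1 + d1δ (δbar v r) r))
        ((-(B * (1 + A)⁻¹) * (1 + A) - -A * (B * (1 + A)⁻¹)) / (1 + A) ^ 2) u :=
      hnum.div hden hAne
    convert this using 1
    field_simp
    ring
  · rw [abs_div]
    have hη3 : (0 : ℝ) < η ^ 3 := by positivity
    have hden : η ^ 3 ≤ |(1 + A) ^ 3| := by
      rw [abs_of_pos (pow_pos (hpos _) 3)]
      exact pow_le_pow_left₀ hη.le (hd1lb _ r hw') 3
    have hnum : |(-B)| ≤ k * |w| := by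
      rw [abs_neg]
      simpa [hr, abs_neg] using hd11bd (δbar u r) r hw'
    calc |(-B)| / |(1 + A) ^ 3| ≤ (k * |w|) / η ^ 3 := by
          apply div_le_div₀ ((abs_nonneg _).trans hnum) hnum hη3 hden
      _ = (k / η ^ 3) * |w| := by ring
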